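/- Let Γ and Γ₀ be finitely generated groups and suppose there is a surjective homomorphism Γ → Γ₀ with finite kernel. Then Γ has the U-property if and only if Γ₀ has the U-property. -/

import Mathlib

/-- The word length of `γ` with respect to a generating set `S`. -/
noncomputable def wordLength {Γ : Type*} [Group Γ] (S : Set Γ) (γ : Γ) : ℕ :=
  sInf {n | ∃ l : List Γ, (∀ x ∈ l, x ∈ S ∨ x⁻¹ ∈ S) ∧ l.length = n ∧ l.prod = γ}

/-- The translation length `ℓ(γ) = inf_η ‖η γ η⁻¹‖`. -/
noncomputable def transLength {Γ : Type*} [Group Γ] (S : Set Γ) (γ : Γ) : ℕ :=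
  sInf {n | ∃ η : Γ, wordLength S (η * γ * η⁻¹) = n}

/-- A group has the U-property (is undistorted in its conjugacy classes) if, for
any finite generating set, there are finitely many elements `g₁, …, g_p` and
constants `A, B > 0` with `‖γ‖ ≤ A · sup_i ℓ(g_i γ) + B` for all `γ`. -/
def HasUProperty (G : Type*) [Group G] : Prop :=
  ∀ S : Set G, S.Finite → Subgroup.closure S = ⊤ →
    ∃ (p : ℕ), 0 < p ∧ ∃ (g : Fin p → G) (A B : ℝ), 0 < A ∧ 0 < B ∧
      ∀ γ : G, (wordLength S γ : ℝ)
        ≤ A * (⨆ i : Fin p, (transLength S (g i * γ) : ℝ)) + B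

section Aux

variable {Γ Γ₀ : Type*} [Group Γ] [Group Γ₀]

/-- the set defining the word length -/
def wordSet (S : Set Γ) (γ : Γ) : Set ℕ :=
  {n | ∃ l : List Γ, (∀ x ∈ l, x ∈ S ∨ x⁻¹ ∈ S) ∧ l.length = n ∧ l.prod = γ}

lemma wordLength_eq (S : Set Γ) (γ : Γ) : wordLength S γ = sInf (wordSet S γ) := rfl

lemma wordSet_nonempty {S : Set Γ} (h : Subgroup.closure S = ⊤) (γ : Γ) :
    (wordSet S γ).Nonempty := by
  have hγ : γ ∈ Subgroup.closure S := h ▸ Subgroup.mem_top γ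
  have hγ' : γ ∈ (Subgroup.closure S).toSubmonoid := hγ
  rw [Subgroup.closure_toSubmonoid] at hγ'
  obtain ⟨l, hl, hprod⟩ := Submonoid.exists_list_of_mem_closure hγ'
  exact ⟨l.length, l, fun x hx => by
    rcases hl x hx with h | h
    · exact Or.inl h
    · exact Or.inr (Set.mem_inv.mp h), rfl, hprod⟩

lemma wordLength_le {S : Set Γ} {γ : Γ} (l : List Γ)
    (hl : ∀ x ∈ l, x ∈ S ∨ x⁻¹ ∈ S) (hprod : l.prod = γ) :
    wordLength S γ ≤ l.length :=
  Nat.sInf_le ⟨l, hl, rfl, hprod⟩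

lemma exists_word {S : Set Γ} (h : Subgroup.closure S = ⊤) (γ : Γ) :
    ∃ l : List Γ, (∀ x ∈ l, x ∈ S ∨ x⁻¹ ∈ S) ∧ l.length = wordLength S γ ∧
      l.prod = γ :=
  Nat.sInf_mem (wordSet_nonempty h γ)

lemma transLength_le (S : Set Γ) (γ η : Γ) :
    transLength S γ ≤ wordLength S (η * γ * η⁻¹) :=
  Nat.sInf_le ⟨η, rfl⟩

lemma exists_trans_witness (S : Set Γ) (γ : Γ) :
    ∃ η : Γ, wordLength S (η * γ * η⁻¹) = transLength S γ := by
  have hne : {n | ∃ η : Γ, wordLength S (η * γ * η⁻¹) = n}.Nonempty :=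
    ⟨wordLength S (1 * γ * 1⁻¹), 1, rfl⟩
  exact Nat.sInf_mem hne

/-- Pushing words forward along `φ`. -/
lemma wordLength_push (φ : Γ →* Γ₀) {S : Set Γ} {S₀ : Set Γ₀}
    (h1 : ∀ x ∈ S, φ x ∈ S₀ ∨ φ x = 1)
    (hS : Subgroup.closure S = ⊤) (γ : Γ) :
    wordLength S₀ (φ γ) ≤ wordLength S γ := by
  classical
  obtain ⟨l, hl, hlen, hprod⟩ := exists_word hS γ
  set l₀ : List Γ₀ := (l.map φ).filter (fun y => y ≠ 1) with hl₀
  have hmem : ∀ y ∈ l₀, y ∈ S₀ ∨ y⁻¹ ∈ S₀ := by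
    intro y hy
    rw [hl₀, List.mem_filter] at hy
    obtain ⟨hy1, hy2⟩ := hy
    have hy2 : y ≠ 1 := by simpa using hy2
    obtain ⟨x, hx, rfl⟩ := List.mem_map.mp hy1
    rcases hl x hx with hxS | hxS
    · rcases h1 x hxS with h | h
      · exact Or.inl h
      · exact absurd h hy2
    · rcases h1 _ hxS with h | h
      · rw [map_inv] at h; exact Or.inr h
      · rw [map_inv, inv_eq_one] at h; exact absurd h hy2
  have hprod₀ : l₀.prod = φ γ := by
    have : ∀ L : List Γ₀, (L.filter (fun y => y ≠ 1)).prod = L.prod := by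
      intro L
      induction L with
      | nil => rfl
      | cons a L ih =>
        by_cases ha : a = 1
        · subst ha; simpa using ih
        · rw [List.filter_cons_of_pos (by simpa using ha), List.prod_cons,
            List.prod_cons, ih]
    rw [hl₀, this, ← hprod]
    exact List.prod_hom l φ
  calc wordLength S₀ (φ γ) ≤ l₀.length := wordLength_le l₀ hmem hprod₀
    _ ≤ (l.map φ).length := List.length_filter_le _ _
    _ = wordLength S γ := by rw [List.length_map, hlen]

/-- Lifting words backward along `φ`, at the cost of a kernel constant. -/
lemma wordLength_lift (φ : Γ →* Γ₀) {S : Set Γ} {S₀ : Set Γ₀}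
    (h2 : ∀ y ∈ S₀, ∃ x ∈ S, φ x = y)
    (hS₀ : Subgroup.closure S₀ = ⊤)
    {C : ℕ} (hC : ∀ k : Γ, φ k = 1 → wordLength S k ≤ C)
    (hCword : ∀ k : Γ, φ k = 1 → (wordSet S k).Nonempty)
    (γ : Γ) : wordLength S γ ≤ wordLength S₀ (φ γ) + C := by
  classical
  obtain ⟨l₀, hl₀, hlen₀, hprod₀⟩ := exists_word hS₀ (φ γ)
  have hlift : ∀ y ∈ l₀, ∃ x : Γ, (x ∈ S ∨ x⁻¹ ∈ S) ∧ φ x = y := by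
    intro y hy
    rcases hl₀ y hy with h | h
    · obtain ⟨x, hx, hφx⟩ := h2 y h
      exact ⟨x, Or.inl hx, hφx⟩
    · obtain ⟨x, hx, hφx⟩ := h2 y⁻¹ h
      exact ⟨x⁻¹, Or.inr (by simpa using hx), by rw [map_inv, hφx, inv_inv]⟩
  set lift : Γ₀ → Γ := fun y =>
    if h : ∃ x : Γ, (x ∈ S ∨ x⁻¹ ∈ S) ∧ φ x = y then h.choose else 1 with hliftdef
  have hliftS : ∀ y ∈ l₀, (lift y ∈ S ∨ (lift y)⁻¹ ∈ S) ∧ φ (lift y) = y := by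
    intro y hy
    have h := hlift y hy
    rw [hliftdef]; simp only [dif_pos h]
    exact h.choose_spec
  set m : List Γ := l₀.map lift with hm
  have hmS : ∀ x ∈ m, x ∈ S ∨ x⁻¹ ∈ S := by
    intro x hx
    obtain ⟨y, hy, rfl⟩ := List.mem_map.mp hx
    exact (hliftS y hy).1
  have hφm : φ m.prod = φ γ := by
    have hmap : m.map φ = l₀ := by
      rw [hm, List.map_map]
      have : l₀.map (⇑φ ∘ lift) = l₀.map id :=
        List.map_congr_left fun y hy => (hliftS y hy).2
      simpa using this
    rw [← List.prod_hom m φ, hmap, hprod₀]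
  set k : Γ := m.prod⁻¹ * γ with hk
  have hφk : φ k = 1 := by rw [hk, map_mul, map_inv, hφm]; simp
  obtain ⟨lk, hlkS, hlklen, hlkprod⟩ := Nat.sInf_mem (hCword k hφk)
  have hword : (m ++ lk).prod = γ := by
    rw [List.prod_append, hlkprod, hk]; group
  have := wordLength_le (m ++ lk) (by
    intro x hx
    rcases List.mem_append.mp hx with h | h
    · exact hmS x h
    · exact hlkS x h) hword
  calc wordLength S γ ≤ (m ++ lk).length := this
    _ = l₀.length + lk.length := by rw [List.length_append, hm, List.length_map]
    _ = wordLength S₀ (φ γ) + wordLength S k := by rw [hlen₀, hlklen, ← wordLength_eq]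
    _ ≤ wordLength S₀ (φ γ) + C := by
        exact Nat.add_le_add_left (hC k hφk) _

lemma transLength_push (φ : Γ →* Γ₀) {S : Set Γ} {S₀ : Set Γ₀}
    (h1 : ∀ x ∈ S, φ x ∈ S₀ ∨ φ x = 1)
    (hS : Subgroup.closure S = ⊤) (γ : Γ) :
    transLength S₀ (φ γ) ≤ transLength S γ := by
  obtain ⟨η, hη⟩ := exists_trans_witness S γ
  calc transLength S₀ (φ γ) ≤ wordLength S₀ (φ η * φ γ * (φ η)⁻¹) :=
        transLength_le _ _ _
    _ = wordLength S₀ (φ (η * γ * η⁻¹)) := by rw [map_mul, map_mul, map_inv]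
    _ ≤ wordLength S (η * γ * η⁻¹) := wordLength_push φ h1 hS _
    _ = transLength S γ := hη

lemma transLength_lift (φ : Γ →* Γ₀) (hsurj : Function.Surjective φ)
    {S : Set Γ} {S₀ : Set Γ₀}
    (h2 : ∀ y ∈ S₀, ∃ x ∈ S, φ x = y)
    (hS₀ : Subgroup.closure S₀ = ⊤)
    {C : ℕ} (hC : ∀ k : Γ, φ k = 1 → wordLength S k ≤ C)
    (hCword : ∀ k : Γ, φ k = 1 → (wordSet S k).Nonempty)
    (γ : Γ) : transLength S γ ≤ transLength S₀ (φ γ) + C := by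
  obtain ⟨η₀, hη₀⟩ := exists_trans_witness S₀ (φ γ)
  obtain ⟨η, rfl⟩ := hsurj η₀
  calc transLength S γ ≤ wordLength S (η * γ * η⁻¹) := transLength_le _ _ _
    _ ≤ wordLength S₀ (φ (η * γ * η⁻¹)) + C :=
        wordLength_lift φ h2 hS₀ hC hCword _
    _ = wordLength S₀ (φ η * φ γ * (φ η)⁻¹) + C := by rw [map_mul, map_mul, map_inv]
    _ = transLength S₀ (φ γ) + C := by rw [hη₀]

/-- A uniform bound on the word length of kernel elements. -/
lemma exists_kernel_bound (φ : Γ →* Γ₀) (hker : Finite φ.ker)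
    {S : Set Γ} (hS : Subgroup.closure S = ⊤) :
    ∃ C : ℕ, ∀ k : Γ, φ k = 1 → wordLength S k ≤ C := by
  have hfin : (φ.ker : Set Γ).Finite := Set.toFinite _
  have himg : (wordLength S '' (φ.ker : Set Γ)).Finite := hfin.image _
  obtain ⟨C, hC⟩ := himg.bddAbove
  refine ⟨C, fun k hk => hC ⟨k, hk, rfl⟩⟩

end Aux

/-- If `Γ → Γ₀` is a surjective homomorphism with finite kernel between finitely
generated groups, then `Γ` has the U-property if and only if `Γ₀` has. -/
theorem U_property_iff_of_surjective_finite_kernel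
    {Γ Γ₀ : Type*} [Group Γ] [Group Γ₀]
    (hfg : ∃ S : Set Γ, S.Finite ∧ Subgroup.closure S = ⊤)
    (hfg₀ : ∃ S₀ : Set Γ₀, S₀.Finite ∧ Subgroup.closure S₀ = ⊤)
    (φ : Γ →* Γ₀) (hsurj : Function.Surjective φ)
    (hker : Finite φ.ker) :
    HasUProperty Γ ↔ HasUProperty Γ₀ := by
  constructor
  · -- Γ has U-property → Γ₀ has it
    intro hU S₀ hS₀fin hS₀gen
    -- construct a generating set of Γ : lifts of S₀ together with the kernel
    set ρ : Γ₀ → Γ := Function.surjInv hsurj with hρ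
    have hρφ : ∀ y, φ (ρ y) = y := fun y => Function.surjInv_eq hsurj y
    set S : Set Γ := ρ '' S₀ ∪ (φ.ker : Set Γ) with hSdef
    have hSfin : S.Finite := (hS₀fin.image ρ).union (Set.toFinite _)
    have hkerS : (φ.ker : Set Γ) ⊆ S := Set.subset_union_right
    have hSgen : Subgroup.closure S = ⊤ := by
      rw [eq_top_iff]
      intro γ _
      have hφγ : φ γ ∈ Subgroup.closure S₀ := hS₀gen ▸ Subgroup.mem_top _
      have hmap : φ γ ∈ (Subgroup.closure S).map φ := by
        have hsub : Subgroup.closure S₀ ≤ (Subgroup.closure S).map φ := by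
          rw [MonoidHom.map_closure]
          apply Subgroup.closure_mono
          intro y hy
          exact ⟨ρ y, Or.inl ⟨y, hy, rfl⟩, hρφ y⟩
        exact hsub hφγ
      obtain ⟨h, hh, hφh⟩ := hmap
      have hk : h⁻¹ * γ ∈ φ.ker := by
        rw [MonoidHom.mem_ker, map_mul, map_inv, hφh]; simp
      have : γ = h * (h⁻¹ * γ) := by group
      rw [this]
      exact Subgroup.mul_mem _ hh (Subgroup.subset_closure (hkerS hk))
    -- conditions relating S and S₀
    have h1 : ∀ x ∈ S, φ x ∈ S₀ ∨ φ x = 1 := by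
      intro x hx
      rcases hx with ⟨y, hy, rfl⟩ | hx
      · exact Or.inl (by rw [hρφ]; exact hy)
      · exact Or.inr hx
    have h2 : ∀ y ∈ S₀, ∃ x ∈ S, φ x = y :=
      fun y hy => ⟨ρ y, Or.inl ⟨y, hy, rfl⟩, hρφ y⟩
    obtain ⟨C, hC⟩ := exists_kernel_bound φ hker hSgen
    have hCword : ∀ k : Γ, φ k = 1 → (wordSet S k).Nonempty :=
      fun k _ => wordSet_nonempty hSgen k
    -- apply the U-property of Γ
    obtain ⟨p, hp, g, A, B, hA, hB, hineq⟩ := hU S hSfin hSgen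
    haveI : Nonempty (Fin p) := ⟨⟨0, hp⟩⟩
    refine ⟨p, hp, fun i => φ (g i), A, A * C + B, hA, by positivity, ?_⟩
    intro γ₀
    obtain ⟨γ, rfl⟩ := hsurj γ₀
    have step1 : (wordLength S₀ (φ γ) : ℝ) ≤ (wordLength S γ : ℝ) :=
      Nat.cast_le.mpr (wordLength_push φ h1 hSgen γ)
    have step2 := hineq γ
    have bdd : BddAbove (Set.range fun i : Fin p =>
        (transLength S₀ (φ (g i) * φ γ) : ℝ)) :=
      (Set.finite_range _).bddAbove
    have step3 : (⨆ i : Fin p, (transLength S (g i * γ) : ℝ))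
        ≤ (⨆ i : Fin p, (transLength S₀ (φ (g i) * φ γ) : ℝ)) + C := by
      apply ciSup_le
      intro i
      have h := transLength_lift φ hsurj h2 hS₀gen hC hCword (g i * γ)
      have h' : (transLength S (g i * γ) : ℝ)
          ≤ (transLength S₀ (φ (g i * γ)) : ℝ) + C := by
        exact_mod_cast h
      rw [map_mul] at h'
      exact h'.trans (add_le_add (le_ciSup bdd i) le_rfl)
    calc (wordLength S₀ (φ γ) : ℝ) ≤ (wordLength S γ : ℝ) := step1
      _ ≤ A * (⨆ i : Fin p, (transLength S (g i * γ) : ℝ)) + B := step2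
      _ ≤ A * ((⨆ i : Fin p, (transLength S₀ (φ (g i) * φ γ) : ℝ)) + C) + B := by
          have := mul_le_mul_of_nonneg_left step3 hA.le
          linarith
      _ = A * (⨆ i : Fin p, (transLength S₀ (φ (g i) * φ γ) : ℝ)) + (A * C + B) := by
          ring
  · -- Γ₀ has U-property → Γ has it
    intro hU₀ S hSfin hSgen
    set S₀ : Set Γ₀ := φ '' S with hS₀def
    have hS₀fin : S₀.Finite := hSfin.image _
    have hS₀gen : Subgroup.closure S₀ = ⊤ := by
      rw [hS₀def, ← MonoidHom.map_closure, hSgen]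
      rw [← MonoidHom.range_eq_map]
      exact MonoidHom.range_eq_top.mpr hsurj
    have h1 : ∀ x ∈ S, φ x ∈ S₀ ∨ φ x = 1 :=
      fun x hx => Or.inl ⟨x, hx, rfl⟩
    have h2 : ∀ y ∈ S₀, ∃ x ∈ S, φ x = y := by
      rintro y ⟨x, hx, rfl⟩; exact ⟨x, hx, rfl⟩
    obtain ⟨C, hC⟩ := exists_kernel_bound φ hker hSgen
    have hCword : ∀ k : Γ, φ k = 1 → (wordSet S k).Nonempty :=
      fun k _ => wordSet_nonempty hSgen k
    obtain ⟨p, hp, g₀, A, B, hA, hB, hineq⟩ := hU₀ S₀ hS₀fin hS₀gen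
    haveI : Nonempty (Fin p) := ⟨⟨0, hp⟩⟩
    set g : Fin p → Γ := fun i => Function.surjInv hsurj (g₀ i) with hg
    have hφg : ∀ i, φ (g i) = g₀ i := fun i => Function.surjInv_eq hsurj _
    refine ⟨p, hp, g, A, B + C, hA, by positivity, ?_⟩
    intro γ
    have step1 : (wordLength S γ : ℝ) ≤ (wordLength S₀ (φ γ) : ℝ) + C := by
      exact_mod_cast wordLength_lift φ h2 hS₀gen hC hCword γ
    have step2 := hineq (φ γ)
    have bdd : BddAbove (Set.range fun i : Fin p =>
        (transLength S (g i * γ) : ℝ)) := (Set.finite_range _).bddAbove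
    have step3 : (⨆ i : Fin p, (transLength S₀ (g₀ i * φ γ) : ℝ))
        ≤ ⨆ i : Fin p, (transLength S (g i * γ) : ℝ) := by
      apply ciSup_le
      intro i
      have h := transLength_push φ h1 hSgen (g i * γ)
      rw [map_mul, hφg] at h
      exact (Nat.cast_le.mpr h).trans (le_ciSup bdd i)
    calc (wordLength S γ : ℝ) ≤ (wordLength S₀ (φ γ) : ℝ) + C := step1
      _ ≤ (A * (⨆ i : Fin p, (transLength S₀ (g₀ i * φ γ) : ℝ)) + B) + C := by
          linarith
      _ ≤ A * (⨆ i : Fin p, (transLength S (g i * γ) : ℝ)) + (B + C) := by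
          have := mul_le_mul_of_nonneg_left step3 hA.le
          linarith
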